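/- If N is a product of n distinct primes, then the number of unordered triples (A,B,C) of positive integers with A ≤ B ≤ C and A·B·C = N equals (3^{n-1}+1)/2. -/

import Mathlib

open Finset ArithmeticFunction
open scoped ArithmeticFunction.zeta

lemma sqf_prod (s : Finset ℕ) (hs : ∀ q ∈ s, q.Prime) : Squarefree (∏ q ∈ s, q) := by
  classical
  induction s using Finset.induction_on with
  | empty => simp
  | @insert a s ha ih =>
    rw [Finset.prod_insert ha]
    have hap : a.Prime := hs a (Finset.mem_insert_self _ _)
    have h2 : ∀ q ∈ s, q.Prime := fun q hq => hs q (Finset.mem_insert_of_mem hq)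
    have hcop : Nat.Coprime a (∏ q ∈ s, q) := by
      rw [hap.coprime_iff_not_dvd]
      intro hdvd
      obtain ⟨q, hq, hdq⟩ := (Nat.Prime.prime hap).dvd_finset_prod_iff _ |>.mp hdvd
      exact ha (((h2 q hq).dvd_iff_eq hap.ne_one).mp hdq ▸ hq)
    exact Nat.squarefree_mul_iff.mpr ⟨hcop, hap.squarefree, ih h2⟩

def Tord (N : ℕ) : Finset (ℕ×ℕ×ℕ) :=
  (N.divisors ×ˢ N.divisors ×ˢ N.divisors).filter (fun t => t.1 * t.2.1 * t.2.2 = N)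

lemma mem_Tord {N : ℕ} (hN : N ≠ 0) {t : ℕ×ℕ×ℕ} :
    t ∈ Tord N ↔ t.1 * t.2.1 * t.2.2 = N := by
  simp only [Tord, Finset.mem_filter, Finset.mem_product, Nat.mem_divisors]
  constructor
  · exact fun h => h.2
  · intro h
    have d1 : t.1 ∣ N := h ▸ ⟨t.2.1 * t.2.2, by ring⟩
    have d2 : t.2.1 ∣ N := h ▸ ⟨t.1 * t.2.2, by ring⟩
    have d3 : t.2.2 ∣ N := h ▸ ⟨t.1 * t.2.1, by ring⟩
    exact ⟨⟨⟨d1, hN⟩, ⟨d2, hN⟩, ⟨d3, hN⟩⟩, h⟩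

lemma card_AD (d : ℕ) : (Nat.divisorsAntidiagonal d).card = d.divisors.card := by
  rw [← Nat.image_fst_divisorsAntidiagonal]
  refine (Finset.card_image_of_injOn ?_).symm
  intro x hx y hy hxy
  obtain ⟨hx1, hx0⟩ := Nat.mem_divisorsAntidiagonal.mp hx
  obtain ⟨hy1, _⟩ := Nat.mem_divisorsAntidiagonal.mp hy
  have : x.1 ≠ 0 := by rintro h; exact hx0 (by rw [← hx1, h, zero_mul])
  exact Prod.ext hxy (Nat.eq_of_mul_eq_mul_left (Nat.pos_of_ne_zero this)
    (by rw [hx1, hxy, hy1]))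

lemma Tord_card {N : ℕ} (hN : N ≠ 0) :
    (Tord N).card = (ζ * ζ * ζ : ArithmeticFunction ℕ) N := by
  have hrep : Tord N = N.divisors.biUnion
      (fun d => (Nat.divisorsAntidiagonal d).image (fun y => (N/d, y.1, y.2))) := by
    ext t
    simp only [mem_Tord hN, Finset.mem_biUnion, Finset.mem_image, Nat.mem_divisors,
      Nat.mem_divisorsAntidiagonal]
    constructor
    · intro h
      have hd0 : 0 < t.2.1 * t.2.2 := by
        rcases Nat.eq_zero_or_pos (t.2.1 * t.2.2) with h0 | h0
        · exact absurd (by rw [← h, mul_assoc, h0, mul_zero]) hN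
        · exact h0
      refine ⟨t.2.1 * t.2.2, ⟨⟨t.1, by rw [← h]; ring⟩, hN⟩, (t.2.1, t.2.2),
        ⟨rfl, hd0.ne'⟩, ?_⟩
      have ht1 : N / (t.2.1 * t.2.2) = t.1 :=
        Nat.div_eq_of_eq_mul_left hd0 (by rw [← h]; ring)
      rw [ht1]
    · rintro ⟨d, ⟨hdvd, _⟩, y, ⟨hy, hd0⟩, rfl⟩
      simp only
      rw [mul_assoc, hy, Nat.div_mul_cancel hdvd]
  rw [hrep, Finset.card_biUnion, show (ζ*ζ*ζ : ArithmeticFunction ℕ) N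
      = ∑ d ∈ N.divisors, (ζ*ζ : ArithmeticFunction ℕ) d from mul_zeta_apply]
  · refine Finset.sum_congr rfl fun d hd => ?_
    have hinj : Function.Injective (fun y : ℕ × ℕ => (N/d, y.1, y.2)) := by
      intro y z h
      have h' := (Prod.ext_iff.mp h).2
      simpa using h'
    rw [Finset.card_image_of_injective _ hinj, card_AD d, mul_zeta_apply]
    rw [Finset.card_eq_sum_ones]
    exact Finset.sum_congr rfl fun i hi => (zeta_apply_ne (Nat.pos_of_mem_divisors hi).ne').symm
  · intro a _ b _ hab
    refine Finset.disjoint_left.mpr ?_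
    rintro t ht ht'
    obtain ⟨y, hy, rfl⟩ := Finset.mem_image.mp ht
    obtain ⟨z, hz, hzz⟩ := Finset.mem_image.mp ht'
    obtain ⟨hy1, _⟩ := Nat.mem_divisorsAntidiagonal.mp hy
    obtain ⟨hz1, _⟩ := Nat.mem_divisorsAntidiagonal.mp hz
    have h2 := (Prod.ext_iff.mp hzz).2
    simp only [Prod.mk.injEq] at h2
    exact hab (by rw [← hy1, ← hz1, h2.1, h2.2])

lemma zzz_prime {q : ℕ} (hq : q.Prime) : (ζ * ζ * ζ : ArithmeticFunction ℕ) q = 3 := by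
  have h2 : (ζ * ζ : ArithmeticFunction ℕ) q = 2 := by
    rw [mul_zeta_apply, hq.divisors]
    rw [Finset.sum_insert (by simp [hq.ne_one, Ne.symm hq.ne_one])]
    simp [zeta_apply_ne hq.ne_zero, hq.ne_zero]
  have h1 : (ζ * ζ : ArithmeticFunction ℕ) 1 = 1 := by
    rw [mul_zeta_apply, Nat.divisors_one]; simp
  rw [mul_zeta_apply, hq.divisors]
  rw [Finset.sum_insert (by simp [hq.ne_one, Ne.symm hq.ne_one]), Finset.sum_singleton, h1, h2]

def perms6 (t : ℕ×ℕ×ℕ) : Finset (ℕ×ℕ×ℕ) :=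
  {(t.1,t.2.1,t.2.2),(t.1,t.2.2,t.2.1),(t.2.1,t.1,t.2.2),
   (t.2.1,t.2.2,t.1),(t.2.2,t.1,t.2.1),(t.2.2,t.2.1,t.1)}

lemma mem_perms6 {s t : ℕ×ℕ×ℕ} : t ∈ perms6 s ↔
    (t = (s.1,s.2.1,s.2.2) ∨ t = (s.1,s.2.2,s.2.1) ∨ t = (s.2.1,s.1,s.2.2) ∨
     t = (s.2.1,s.2.2,s.1) ∨ t = (s.2.2,s.1,s.2.1) ∨ t = (s.2.2,s.2.1,s.1)) := by
  simp [perms6]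

lemma card6 {a b c : ℕ} (h1 : a < b) (h2 : b < c) : (perms6 (a,b,c)).card = 6 := by
  simp only [perms6]
  rw [Finset.card_insert_of_notMem (by simp [Prod.ext_iff]; omega),
    Finset.card_insert_of_notMem (by simp [Prod.ext_iff]; omega),
    Finset.card_insert_of_notMem (by simp [Prod.ext_iff]; omega),
    Finset.card_insert_of_notMem (by simp [Prod.ext_iff]; omega),
    Finset.card_insert_of_notMem (by simp [Prod.ext_iff]; omega),
    Finset.card_singleton]

def Sord (N : ℕ) : Finset (ℕ×ℕ×ℕ) :=
  (Tord N).filter (fun t => t.1 ≤ t.2.1 ∧ t.2.1 ≤ t.2.2)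

def Sstrict (N : ℕ) : Finset (ℕ×ℕ×ℕ) :=
  (Tord N).filter (fun t => t.1 < t.2.1 ∧ t.2.1 < t.2.2)

lemma mem_Sstrict {N : ℕ} (hN : N ≠ 0) {x y z : ℕ} (h : x * y * z = N)
    (h1 : x < y) (h2 : y < z) : (x,y,z) ∈ Sstrict N :=
  Finset.mem_filter.mpr ⟨(mem_Tord hN).mpr h, h1, h2⟩

/-- Number of cuboids with integer edge lengths and volume `N`. -/
noncomputable def cuboidCount (N : ℕ) : ℕ :=
  Set.ncard {t : ℕ × ℕ × ℕ | 0 < t.1 ∧ t.1 ≤ t.2.1 ∧ t.2.1 ≤ t.2.2 ∧ t.1 * t.2.1 * t.2.2 = N}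

theorem cuboid_count_squarefree (n : ℕ) (hn : 1 ≤ n) (p : ℕ → ℕ) (N : ℕ)
    (hp : ∀ i < n, (p i).Prime) (hinj : ∀ i < n, ∀ j < n, p i = p j → i = j)
    (hN : N = ∏ i ∈ Finset.range n, p i) :
    (cuboidCount N : ℚ) = (3 ^ (n - 1) + 1) / 2 := by
  classical
  have hN0 : N ≠ 0 := by
    rw [hN]
    exact Finset.prod_ne_zero_iff.mpr fun i hi => (hp i (Finset.mem_range.mp hi)).ne_zero
  have hN1 : 1 < N := by
    rcases Nat.lt_or_ge 1 N with h | h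
    · exact h
    · exfalso
      have hdvd : p 0 ∣ N := by
        rw [hN]; exact Finset.dvd_prod_of_mem _ (Finset.mem_range.mpr hn)
      have hone : N = 1 := by omega
      rw [hone] at hdvd
      exact (hp 0 hn).ne_one (Nat.dvd_one.mp hdvd)
  have hSf : Squarefree N := by
    have hinj' : ∀ x ∈ Finset.range n, ∀ y ∈ Finset.range n, p x = p y → x = y :=
      fun x hx y hy h => hinj x (Finset.mem_range.mp hx) y (Finset.mem_range.mp hy) h
    have hNi : N = ∏ q ∈ (Finset.range n).image p, q := by
      rw [Finset.prod_image hinj', hN]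
    rw [hNi]
    refine sqf_prod _ ?_
    simp only [Finset.mem_image]
    rintro q ⟨i, hi, rfl⟩
    exact hp i (Finset.mem_range.mp hi)
  -- ordered count = 3 ^ n
  have hmult : (ζ * ζ * ζ : ArithmeticFunction ℕ).IsMultiplicative :=
    (isMultiplicative_zeta.mul isMultiplicative_zeta).mul isMultiplicative_zeta
  have hTcard : (Tord N).card = 3 ^ n := by
    have hpair : ((Finset.range n : Finset ℕ) : Set ℕ).Pairwise (Function.onFun Nat.Coprime p) := by
      intro i hi j hj hne
      exact (Nat.coprime_primes (hp i (by simpa using hi)) (hp j (by simpa using hj))).mpr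
        fun h => hne (hinj i (by simpa using hi) j (by simpa using hj) h)
    rw [Tord_card hN0, hN, hmult.map_prod p _ hpair]
    rw [Finset.prod_congr rfl fun i hi => zzz_prime (hp i (Finset.mem_range.mp hi))]
    simp
  -- squarefree consequences
  have pairone : ∀ t ∈ Tord N, (t.1 = t.2.1 → t.1 = 1) ∧ (t.2.1 = t.2.2 → t.2.1 = 1) ∧
      (t.1 = t.2.2 → t.1 = 1) := by
    intro t ht
    rw [mem_Tord hN0] at ht
    refine ⟨fun h => ?_, fun h => ?_, fun h => ?_⟩
    · exact Nat.isUnit_iff.mp (hSf t.1 ⟨t.2.2, by rw [← ht, ← h]⟩)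
    · exact Nat.isUnit_iff.mp (hSf t.2.1 ⟨t.1, by rw [← ht, ← h]; ring⟩)
    · exact Nat.isUnit_iff.mp (hSf t.1 ⟨t.2.1, by rw [← ht, ← h]; ring⟩)
  -- cuboidCount as a Finset card
  have hcub : cuboidCount N = (Sord N).card := by
    rw [cuboidCount, ← Set.ncard_coe_finset]
    congr 1
    ext t
    constructor
    · rintro ⟨h0, h1, h2, h3⟩
      exact Finset.mem_coe.mpr (Finset.mem_filter.mpr ⟨(mem_Tord hN0).mpr h3, h1, h2⟩)
    · intro h
      obtain ⟨hT, h1, h2⟩ := Finset.mem_filter.mp (Finset.mem_coe.mp h)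
      have h3 := (mem_Tord hN0).mp hT
      refine ⟨Nat.pos_of_ne_zero fun h0 => hN0 ?_, h1, h2, h3⟩
      rw [← h3, h0, zero_mul, zero_mul]
  -- Sord = insert (1,1,N) Sstrict
  have hSdecomp : Sord N = insert (1,1,N) (Sstrict N) := by
    ext t
    simp only [Sord, Sstrict, Finset.mem_insert, Finset.mem_filter]
    constructor
    · rintro ⟨hT, h1, h2⟩
      have h3 := (mem_Tord hN0).mp hT
      rcases eq_or_lt_of_le h1 with he | hlt
      · left
        have ha : t.1 = 1 := (pairone t hT).1 he
        have hb : t.2.1 = 1 := by rw [← he, ha]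
        have hc : t.2.2 = N := by rw [ha, hb] at h3; simpa using h3
        rw [Prod.ext_iff, Prod.ext_iff]
        exact ⟨ha, hb, hc⟩
      · rcases eq_or_lt_of_le h2 with he2 | hlt2
        · exfalso
          have hb : t.2.1 = 1 := (pairone t hT).2.1 he2
          rw [hb, ← he2, hb] at h3
          omega
        · right; exact ⟨hT, hlt, hlt2⟩
    · rintro (rfl | ⟨hT, h1, h2⟩)
      · exact ⟨(mem_Tord hN0).mpr (by simp), le_refl 1, (by omega : (1:ℕ) ≤ N)⟩
      · exact ⟨hT, le_of_lt h1, le_of_lt h2⟩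
  have hnotmem : (1,1,N) ∉ Sstrict N := by
    simp [Sstrict]
  have hScard : (Sord N).card = (Sstrict N).card + 1 := by
    rw [hSdecomp, Finset.card_insert_of_notMem hnotmem]
  -- Tord decomposition
  have hTdecomp : Tord N = ({(1,1,N),(1,N,1),(N,1,1)} : Finset (ℕ×ℕ×ℕ)) ∪
      (Sstrict N).biUnion perms6 := by
    ext t
    simp only [Finset.mem_union, Finset.mem_insert, Finset.mem_singleton, Finset.mem_biUnion]
    constructor
    · intro hT
      have hprod := (mem_Tord hN0).mp hT
      have hP := pairone t hT
      by_cases h12 : t.1 = t.2.1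
      · left; left
        have ha := hP.1 h12
        have hb : t.2.1 = 1 := by rw [← h12, ha]
        have hc : t.2.2 = N := by rw [ha, hb] at hprod; simpa using hprod
        rw [Prod.ext_iff, Prod.ext_iff]; exact ⟨ha, hb, hc⟩
      · by_cases h23 : t.2.1 = t.2.2
        · left; right; right
          have hb := hP.2.1 h23
          have hc : t.2.2 = 1 := by rw [← h23, hb]
          have ha : t.1 = N := by rw [hb, hc] at hprod; simpa using hprod
          rw [Prod.ext_iff, Prod.ext_iff]; exact ⟨ha, hb, hc⟩
        · by_cases h13 : t.1 = t.2.2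
          · left; right; left
            have ha := hP.2.2 h13
            have hc : t.2.2 = 1 := by rw [← h13, ha]
            have hb : t.2.1 = N := by rw [ha, hc] at hprod; simpa using hprod
            rw [Prod.ext_iff, Prod.ext_iff]; exact ⟨ha, hb, hc⟩
          · right
            rcases Nat.lt_or_ge t.1 t.2.1 with hA | hA <;>
              rcases Nat.lt_or_ge t.2.1 t.2.2 with hB | hB <;>
                rcases Nat.lt_or_ge t.1 t.2.2 with hC | hC
            · exact ⟨(t.1, t.2.1, t.2.2), mem_Sstrict hN0 (by rw [← hprod]) hA hB,
                mem_perms6.mpr (Or.inl rfl)⟩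
            · omega
            · exact ⟨(t.1, t.2.2, t.2.1), mem_Sstrict hN0 (by rw [← hprod]; ring)
                hC (by omega), mem_perms6.mpr (Or.inr (Or.inl rfl))⟩
            · exact ⟨(t.2.2, t.1, t.2.1), mem_Sstrict hN0 (by rw [← hprod]; ring)
                (by omega) (by omega), mem_perms6.mpr (Or.inr (Or.inr (Or.inr (Or.inl rfl))))⟩
            · exact ⟨(t.2.1, t.1, t.2.2), mem_Sstrict hN0 (by rw [← hprod]; ring)
                (by omega) hC, mem_perms6.mpr (Or.inr (Or.inr (Or.inl rfl)))⟩
            · exact ⟨(t.2.1, t.2.2, t.1), mem_Sstrict hN0 (by rw [← hprod]; ring)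
                hB (by omega), mem_perms6.mpr (Or.inr (Or.inr (Or.inr (Or.inr (Or.inl rfl)))))⟩
            · omega
            · exact ⟨(t.2.2, t.2.1, t.1), mem_Sstrict hN0 (by rw [← hprod]; ring)
                (by omega) (by omega),
                mem_perms6.mpr (Or.inr (Or.inr (Or.inr (Or.inr (Or.inr rfl)))))⟩
    · rintro ((rfl | rfl | rfl) | ⟨s, hs, hts⟩)
      · exact (mem_Tord hN0).mpr (by simp)
      · exact (mem_Tord hN0).mpr (by simp)
      · exact (mem_Tord hN0).mpr (by simp)
      · obtain ⟨hsT, _, _⟩ := Finset.mem_filter.mp hs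
        have hsp := (mem_Tord hN0).mp hsT
        rw [mem_perms6] at hts
        rcases hts with rfl | rfl | rfl | rfl | rfl | rfl <;>
          exact (mem_Tord hN0).mpr (by rw [← hsp]; try ring)
  have hdisj : Disjoint ({(1,1,N),(1,N,1),(N,1,1)} : Finset (ℕ×ℕ×ℕ))
      ((Sstrict N).biUnion perms6) := by
    refine Finset.disjoint_left.mpr ?_
    intro t ht htb
    obtain ⟨s, hs, hts⟩ := Finset.mem_biUnion.mp htb
    obtain ⟨_, hs1, hs2⟩ := Finset.mem_filter.mp hs
    rw [mem_perms6] at hts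
    simp only [Finset.mem_insert, Finset.mem_singleton, Prod.ext_iff] at ht hts
    omega
  have hpairdisj : ∀ a ∈ Sstrict N, ∀ b ∈ Sstrict N, a ≠ b →
      Disjoint (perms6 a) (perms6 b) := by
    intro a ha b hb hab
    refine Finset.disjoint_left.mpr ?_
    intro t hta htb
    obtain ⟨_, ha1, ha2⟩ := Finset.mem_filter.mp ha
    obtain ⟨_, hb1, hb2⟩ := Finset.mem_filter.mp hb
    rw [mem_perms6] at hta htb
    apply hab
    rw [Prod.ext_iff, Prod.ext_iff]
    simp only [Prod.ext_iff] at hta htb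
    omega
  have hT3card : ({(1,1,N),(1,N,1),(N,1,1)} : Finset (ℕ×ℕ×ℕ)).card = 3 := by
    rw [Finset.card_insert_of_notMem (by simp [Prod.ext_iff]; omega),
      Finset.card_insert_of_notMem (by simp [Prod.ext_iff]; omega),
      Finset.card_singleton]
  have hT6 : (Tord N).card = 3 + 6 * (Sstrict N).card := by
    rw [hTdecomp, Finset.card_union_of_disjoint hdisj, Finset.card_biUnion hpairdisj, hT3card]
    congr 1
    rw [Finset.sum_congr rfl fun s hs => ?_, Finset.sum_const, smul_eq_mul, mul_comm]
    obtain ⟨_, h1, h2⟩ := Finset.mem_filter.mp hs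
    exact card6 h1 h2
  have hkey : 3 + 6 * (Sstrict N).card = 3 ^ n := by rw [← hT6, hTcard]
  rw [hcub, hScard]
  have hn' : n - 1 + 1 = n := by omega
  have h3n : (3:ℚ) ^ n = 3 ^ (n-1) * 3 := by rw [← pow_succ, hn']
  have hcast : (3:ℚ) + 6 * ((Sstrict N).card : ℚ) = 3 ^ n := by exact_mod_cast hkey
  rw [h3n] at hcast
  push_cast
  rw [eq_div_iff (by norm_num : (2:ℚ) ≠ 0)]
  linarith
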